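/- Let 0 < k₁ < k₂ and d > 0, and assume 2d√(k₂² − k₁²) ≠ nπ for every positive integer n. Define F : (k₁, k₂) → ℝ by F(ξ) = (2ξ² − k₁² − k₂²) · sin(2d√(k₂² − ξ²)) / √(k₂² − ξ²) + 2√(ξ² − k₁²) · cos(2d√(k₂² − ξ²)). Then the zero set {ξ ∈ (k₁, k₂) : F(ξ) = 0} is finite. -/

import Mathlib

open Filter Topology Set

section Helpers

lemma realAnalyticAt_of_complex {f : ℂ → ℂ} {g : ℝ → ℝ} {x : ℝ}
    (hf : AnalyticAt ℂ f (x : ℂ)) (hfg : ∀ y : ℝ, g y = (f y).re) :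
    AnalyticAt ℝ g x := by
  have h2 : AnalyticAt ℝ (fun t : ℝ => f t) x :=
    hf.restrictScalars.comp (Complex.ofRealCLM.analyticAt x)
  have h3 : AnalyticAt ℝ (fun t : ℝ => (f t).re) x :=
    ((Complex.reCLM.analyticAt _).comp h2 : )
  exact h3.congr (by filter_upwards with y using (hfg y).symm)

lemma analyticAt_rsin (x : ℝ) : AnalyticAt ℝ Real.sin x :=
  realAnalyticAt_of_complex (Complex.differentiable_sin.analyticAt _)
    (fun y => (Complex.sin_ofReal_re y).symm)

lemma analyticAt_rcos (x : ℝ) : AnalyticAt ℝ Real.cos x :=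
  realAnalyticAt_of_complex (Complex.differentiable_cos.analyticAt _)
    (fun y => (Complex.cos_ofReal_re y).symm)

lemma analyticAt_rlog {x : ℝ} (hx : 0 < x) : AnalyticAt ℝ Real.log x :=
  realAnalyticAt_of_complex (analyticAt_clog (by simp [Complex.mem_slitPlane_iff, hx]))
    (fun y => (Complex.log_ofReal_re y).symm)

lemma analyticAt_rsqrt {x : ℝ} (hx : 0 < x) : AnalyticAt ℝ Real.sqrt x := by
  have h : AnalyticAt ℝ (fun y : ℝ => Real.exp (Real.log y * (1/2 : ℝ))) x :=
    ((analyticAt_rlog hx).mul analyticAt_const).rexp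
  apply h.congr
  filter_upwards [eventually_gt_nhds hx] with y hy
  rw [← Real.rpow_def_of_pos hy, ← Real.sqrt_eq_rpow]

lemma sin_div_tendsto (d : ℝ) :
    Tendsto (fun t : ℝ => Real.sin (2 * d * t) / t) (𝓝[≠] (0:ℝ)) (𝓝 (2 * d)) := by
  have h : HasDerivAt (fun t : ℝ => Real.sin (2 * d * t)) (2 * d) 0 := by
    simpa [Function.comp_def] using (Real.hasDerivAt_sin (2 * d * 0)).comp 0 ((hasDerivAt_id (0:ℝ)).const_mul (2 * d))
  rw [hasDerivAt_iff_tendsto_slope] at h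
  refine h.congr' ?_
  filter_upwards [self_mem_nhdsWithin] with t ht
  simp [slope_def_field, mul_zero, Real.sin_zero]

end Helpers

/-- For `0 < k₁ < k₂`, `d > 0`, under the non-resonance condition
`2d√(k₂²−k₁²) ≠ nπ` for all positive integers `n`, the set of zeros in `(k₁, k₂)` of the
Wronskian expression
`F(ξ) = (2ξ²−k₁²−k₂²) sin(2d√(k₂²−ξ²))/√(k₂²−ξ²) + 2√(ξ²−k₁²) cos(2d√(k₂²−ξ²))`
is finite. -/
theorem wronskian_zero_set_finite (k₁ k₂ d : ℝ)
    (h1 : 0 < k₁) (h2 : k₁ < k₂) (hd : 0 < d)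
    (hres : ∀ n : ℕ, 0 < n → 2 * d * Real.sqrt (k₂ ^ 2 - k₁ ^ 2) ≠ n * Real.pi) :
    Set.Finite {ξ : ℝ | ξ ∈ Set.Ioo k₁ k₂ ∧
      (2 * ξ ^ 2 - k₁ ^ 2 - k₂ ^ 2) * Real.sin (2 * d * Real.sqrt (k₂ ^ 2 - ξ ^ 2)) /
          Real.sqrt (k₂ ^ 2 - ξ ^ 2) +
        2 * Real.sqrt (ξ ^ 2 - k₁ ^ 2) * Real.cos (2 * d * Real.sqrt (k₂ ^ 2 - ξ ^ 2)) = 0} := by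
  set F : ℝ → ℝ := fun ξ =>
      (2 * ξ ^ 2 - k₁ ^ 2 - k₂ ^ 2) * Real.sin (2 * d * Real.sqrt (k₂ ^ 2 - ξ ^ 2)) /
          Real.sqrt (k₂ ^ 2 - ξ ^ 2) +
        2 * Real.sqrt (ξ ^ 2 - k₁ ^ 2) * Real.cos (2 * d * Real.sqrt (k₂ ^ 2 - ξ ^ 2)) with hFdef
  set S : Set ℝ := {ξ : ℝ | ξ ∈ Set.Ioo k₁ k₂ ∧ F ξ = 0} with hSdef
  have hkk : 0 < k₂ ^ 2 - k₁ ^ 2 := by nlinarith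
  have hsqkk : (0:ℝ) < Real.sqrt (k₂ ^ 2 - k₁ ^ 2) := Real.sqrt_pos.2 hkk
  -- analyticity of F on the open interval
  have hFa : AnalyticOnNhd ℝ F (Set.Ioo k₁ k₂) := by
    intro ξ hξ
    obtain ⟨ha, hb⟩ := hξ
    have h2ξ : 0 < k₂ ^ 2 - ξ ^ 2 := by nlinarith
    have h1ξ : 0 < ξ ^ 2 - k₁ ^ 2 := by nlinarith
    have hpoly : AnalyticAt ℝ (fun x : ℝ => k₂ ^ 2 - x ^ 2) ξ :=
      analyticAt_const.sub (analyticAt_id.pow 2)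
    have hs : AnalyticAt ℝ (fun x : ℝ => Real.sqrt (k₂ ^ 2 - x ^ 2)) ξ :=
      AnalyticAt.comp (f := fun x : ℝ => k₂ ^ 2 - x ^ 2) (analyticAt_rsqrt h2ξ) hpoly
    have hw : AnalyticAt ℝ (fun x : ℝ => 2 * d * Real.sqrt (k₂ ^ 2 - x ^ 2)) ξ :=
      analyticAt_const.mul hs
    have hsin : AnalyticAt ℝ (fun x : ℝ => Real.sin (2 * d * Real.sqrt (k₂ ^ 2 - x ^ 2))) ξ :=
      (analyticAt_rsin _).comp hw
    have hcos : AnalyticAt ℝ (fun x : ℝ => Real.cos (2 * d * Real.sqrt (k₂ ^ 2 - x ^ 2))) ξ :=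
      (analyticAt_rcos _).comp hw
    have hq : AnalyticAt ℝ (fun x : ℝ => 2 * x ^ 2 - k₁ ^ 2 - k₂ ^ 2) ξ :=
      ((analyticAt_const.mul (analyticAt_id.pow 2)).sub analyticAt_const).sub analyticAt_const
    have hr : AnalyticAt ℝ (fun x : ℝ => Real.sqrt (x ^ 2 - k₁ ^ 2)) ξ :=
      AnalyticAt.comp (f := fun x : ℝ => x ^ 2 - k₁ ^ 2) (analyticAt_rsqrt h1ξ)
        ((analyticAt_id.pow 2).sub analyticAt_const)
    exact ((hq.mul hsin).div hs (ne_of_gt (Real.sqrt_pos.2 h2ξ))).add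
      ((analyticAt_const.mul hr).mul hcos)
  -- the limit of F at the right endpoint k₂
  have hL₂ : Tendsto F (𝓝[Set.Ioo k₁ k₂] k₂)
      (𝓝 ((k₂ ^ 2 - k₁ ^ 2) * (2 * d) + 2 * Real.sqrt (k₂ ^ 2 - k₁ ^ 2) * 1)) := by
    have hs0 : Tendsto (fun ξ : ℝ => Real.sqrt (k₂ ^ 2 - ξ ^ 2)) (𝓝[Set.Ioo k₁ k₂] k₂)
        (𝓝[>] (0:ℝ)) := by
      apply tendsto_nhdsWithin_of_tendsto_nhds_of_eventually_within
      · have hc : Continuous (fun ξ : ℝ => Real.sqrt (k₂ ^ 2 - ξ ^ 2)) := by fun_prop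
        exact (hc.tendsto' k₂ 0 (by simp)).mono_left nhdsWithin_le_nhds
      · filter_upwards [self_mem_nhdsWithin] with ξ hξ
        have : 0 < k₂ ^ 2 - ξ ^ 2 := by nlinarith [hξ.1, hξ.2, h1]
        exact Real.sqrt_pos.2 this
    have hs0' : Tendsto (fun ξ : ℝ => Real.sqrt (k₂ ^ 2 - ξ ^ 2)) (𝓝[Set.Ioo k₁ k₂] k₂)
        (𝓝[≠] (0:ℝ)) := hs0.mono_right (nhdsWithin_mono _ (fun x hx => ne_of_gt hx))
    have h2t : Tendsto (fun ξ : ℝ =>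
        Real.sin (2 * d * Real.sqrt (k₂ ^ 2 - ξ ^ 2)) / Real.sqrt (k₂ ^ 2 - ξ ^ 2))
        (𝓝[Set.Ioo k₁ k₂] k₂) (𝓝 (2 * d)) := (sin_div_tendsto d).comp hs0'
    have h1t : Tendsto (fun ξ : ℝ => 2 * ξ ^ 2 - k₁ ^ 2 - k₂ ^ 2) (𝓝[Set.Ioo k₁ k₂] k₂)
        (𝓝 (k₂ ^ 2 - k₁ ^ 2)) := by
      have hc : Continuous (fun ξ : ℝ => 2 * ξ ^ 2 - k₁ ^ 2 - k₂ ^ 2) := by fun_prop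
      exact (hc.tendsto' k₂ _ (by ring)).mono_left nhdsWithin_le_nhds
    have h3t : Tendsto (fun ξ : ℝ => 2 * Real.sqrt (ξ ^ 2 - k₁ ^ 2)) (𝓝[Set.Ioo k₁ k₂] k₂)
        (𝓝 (2 * Real.sqrt (k₂ ^ 2 - k₁ ^ 2))) := by
      have hc : Continuous (fun ξ : ℝ => 2 * Real.sqrt (ξ ^ 2 - k₁ ^ 2)) := by fun_prop
      exact (hc.tendsto' k₂ _ rfl).mono_left nhdsWithin_le_nhds
    have h4t : Tendsto (fun ξ : ℝ => Real.cos (2 * d * Real.sqrt (k₂ ^ 2 - ξ ^ 2)))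
        (𝓝[Set.Ioo k₁ k₂] k₂) (𝓝 1) := by
      have hc : Continuous (fun ξ : ℝ => Real.cos (2 * d * Real.sqrt (k₂ ^ 2 - ξ ^ 2))) := by
        fun_prop
      exact (hc.tendsto' k₂ _ (by simp)).mono_left nhdsWithin_le_nhds
    exact ((h1t.mul h2t).add (h3t.mul h4t)).congr (fun ξ => by rw [hFdef]; ring)
  have hL₂ne : (k₂ ^ 2 - k₁ ^ 2) * (2 * d) + 2 * Real.sqrt (k₂ ^ 2 - k₁ ^ 2) * 1 ≠ 0 := by
    positivity
  -- the limit of F at the left endpoint k₁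
  have hL₁ : Tendsto F (𝓝[Set.Ioo k₁ k₂] k₁) (𝓝 (F k₁)) := by
    have hc : ContinuousAt F k₁ := by
      apply ContinuousAt.add
      · exact ContinuousAt.div (by fun_prop) (by fun_prop) (ne_of_gt hsqkk)
      · fun_prop
    exact hc.continuousWithinAt
  have hsin_ne : Real.sin (2 * d * Real.sqrt (k₂ ^ 2 - k₁ ^ 2)) ≠ 0 := by
    intro hz
    rw [Real.sin_eq_zero_iff] at hz
    obtain ⟨n, hn⟩ := hz
    have hpos : 0 < 2 * d * Real.sqrt (k₂ ^ 2 - k₁ ^ 2) := by positivity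
    have hnpos : 0 < n := by
      by_contra hn0
      push_neg at hn0
      have : (n : ℝ) * Real.pi ≤ 0 :=
        mul_nonpos_of_nonpos_of_nonneg (by exact_mod_cast hn0) Real.pi_pos.le
      linarith [hn ▸ this]
    have := hres n.toNat (by omega)
    apply this
    rw [← hn]
    congr 1
    exact_mod_cast (Int.toNat_of_nonneg hnpos.le).symm
  have hFk₁ : F k₁ ≠ 0 := by
    have : F k₁ = (2 * k₁ ^ 2 - k₁ ^ 2 - k₂ ^ 2) *
        Real.sin (2 * d * Real.sqrt (k₂ ^ 2 - k₁ ^ 2)) / Real.sqrt (k₂ ^ 2 - k₁ ^ 2) := by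
      rw [hFdef]
      simp
    rw [this]
    apply div_ne_zero (mul_ne_zero (by nlinarith) hsin_ne) (ne_of_gt hsqkk)
  -- main argument: an infinite zero set would have an accumulation point in [k₁, k₂]
  by_contra hfin
  rw [← Set.not_infinite, not_not] at hfin
  have hsub : S ⊆ Set.Icc k₁ k₂ := fun x hx => Set.Ioo_subset_Icc_self hx.1
  obtain ⟨x₀, hx₀K, hacc⟩ := hfin.exists_accPt_of_subset_isCompact isCompact_Icc hsub
  rw [accPt_iff_frequently] at hacc
  have hfreq : ∃ᶠ y in 𝓝[≠] x₀, y ∈ S := by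
    rw [frequently_nhdsWithin_iff]
    exact hacc.mono (fun y hy => ⟨hy.2, hy.1⟩)
  -- helper: no accumulation at a point where F has a nonzero limit along Ioo
  have no_acc_endpoint : ∀ (x : ℝ) (L : ℝ), L ≠ 0 →
      Tendsto F (𝓝[Set.Ioo k₁ k₂] x) (𝓝 L) → ¬ (∃ᶠ y in 𝓝[≠] x, y ∈ S) := by
    intro x L hLne hT hfr
    have hev : ∀ᶠ y in 𝓝[Set.Ioo k₁ k₂] x, F y ≠ 0 := hT.eventually_ne hLne
    rw [eventually_nhdsWithin_iff] at hev
    have hev' : ∀ᶠ y in 𝓝[≠] x, y ∈ Set.Ioo k₁ k₂ → F y ≠ 0 :=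
      hev.filter_mono nhdsWithin_le_nhds
    obtain ⟨y, hyS, hy⟩ := (hfr.and_eventually hev').exists
    exact hy hyS.1 hyS.2
  rcases eq_or_lt_of_le hx₀K.1 with h₁eq | h₁lt
  · exact no_acc_endpoint k₁ (F k₁) hFk₁ (h₁eq ▸ hL₁) (h₁eq ▸ hfreq)
  rcases eq_or_lt_of_le hx₀K.2 with h₂eq | h₂lt
  · exact no_acc_endpoint k₂ _ hL₂ne (h₂eq ▸ hL₂) (h₂eq ▸ hfreq)
  -- interior accumulation point: identity theorem forces F ≡ 0 on (k₁, k₂)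
  have hx₀mem : x₀ ∈ Set.Ioo k₁ k₂ := ⟨h₁lt, h₂lt⟩
  have hfz : ∃ᶠ z in 𝓝[≠] x₀, F z = 0 := hfreq.mono (fun y hy => hy.2)
  have hEq : Set.EqOn F 0 (Set.Ioo k₁ k₂) :=
    hFa.eqOn_zero_of_preconnected_of_frequently_eq_zero isPreconnected_Ioo hx₀mem hfz
  have hnb : (𝓝[Set.Ioo k₁ k₂] k₂).NeBot := by
    rw [← mem_closure_iff_nhdsWithin_neBot, closure_Ioo (ne_of_lt h2)]
    exact ⟨h2.le, le_refl _⟩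
  have hzero : Tendsto F (𝓝[Set.Ioo k₁ k₂] k₂) (𝓝 0) := by
    refine Tendsto.congr' ?_ tendsto_const_nhds
    filter_upwards [self_mem_nhdsWithin] with y hy
    exact (hEq hy).symm
  exact hL₂ne (tendsto_nhds_unique hL₂ hzero)
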